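/- Let a, b, m be integers with 1 ≤ a < b ≤ m. Then for all n ≥ 0, the number of overpartitions of n in which the parts congruent to a mod m (counted with overlined and non-overlined parts together) outnumber the parts congruent to b mod m is at least the number of overpartitions of n in which the parts congruent to b mod m outnumber the parts congruent to a mod m. -/

import Mathlib

/-- The number of parts of the multiset `μ` congruent to `a` modulo `m`. -/
def countRes (m a : ℕ) (μ : Multiset ℕ) : ℕ :=
  (μ.filter (fun p => p % m = a % m)).card

/-- The number of overpartitions of `n`, modeled as pairs `(λ, μ)` of a
partition `λ` and a distinct-parts partition `μ` with `|λ| + |μ| = n`, in which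
the parts congruent to `a` mod `m` outnumber the parts congruent to `b` mod `m`. -/
def overBias (a b m n : ℕ) : ℕ :=
  ∑ kl ∈ Finset.HasAntidiagonal.antidiagonal n,
    ((Finset.univ : Finset (kl.1.Partition × kl.2.Partition)).filter
      (fun p => p.2.parts.Nodup ∧
        countRes m b p.1.parts + countRes m b p.2.parts <
          countRes m a p.1.parts + countRes m a p.2.parts)).card

namespace OverBiasAux

/-- swap residues a and b -/
def swapF (m a b p : ℕ) : ℕ :=
  if p % m = a % m then p + (b - a) else if p % m = b % m then p - (b - a) else p

section
variable {m a b : ℕ}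

lemma hAB (ha : 1 ≤ a) (hab : a < b) (hbm : b ≤ m) : a % m ≠ b % m := by
  have h1 : a % m = a := Nat.mod_eq_of_lt (by omega)
  rcases eq_or_lt_of_le hbm with h | h
  · have : b % m = 0 := by rw [h]; simp
    omega
  · have : b % m = b := Nat.mod_eq_of_lt h
    omega

lemma h1B (ha : 1 ≤ a) (hab : a < b) (hbm : b ≤ m) : 1 % m ≠ b % m := by
  have h1 : (1:ℕ) % m = 1 := Nat.mod_eq_of_lt (by omega)
  rcases eq_or_lt_of_le hbm with h | h
  · have : b % m = 0 := by rw [h]; simp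
    omega
  · have : b % m = b := Nat.mod_eq_of_lt h
    omega

lemma swapF_spec (ha : 1 ≤ a) (hab : a < b) (hbm : b ≤ m) (p : ℕ) (hp : 1 ≤ p) :
    (p % m = a % m ∧ swapF m a b p = p + (b - a) ∧ (swapF m a b p) % m = b % m) ∨
    (p % m = b % m ∧ swapF m a b p = p - (b - a) ∧ b - a < p ∧
      (swapF m a b p) % m = a % m) ∨
    (p % m ≠ a % m ∧ p % m ≠ b % m ∧ swapF m a b p = p) := by
  by_cases h1 : p % m = a % m
  · left
    have heq : swapF m a b p = p + (b - a) := if_pos h1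
    refine ⟨h1, heq, ?_⟩
    have hmod : p + (b - a) ≡ a + (b - a) [MOD m] := Nat.ModEq.add_right _ h1
    have : a + (b - a) = b := by omega
    rw [heq]
    rw [this] at hmod
    exact hmod
  · by_cases h2 : p % m = b % m
    · right; left
      have heq : swapF m a b p = p - (b - a) := by rw [swapF, if_neg h1, if_pos h2]
      have hgt : b - a < p := by
        by_contra hc
        push_neg at hc
        have hlt : p < m := by omega
        have : p % m = p := Nat.mod_eq_of_lt hlt
        rcases eq_or_lt_of_le hbm with h | h
        · have hb0 : b % m = 0 := by rw [h]; simp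
          omega
        · have : b % m = b := Nat.mod_eq_of_lt h
          omega
      refine ⟨h2, heq, hgt, ?_⟩
      rw [heq]
      have h3 : (p - (b - a)) + (b - a) ≡ a + (b - a) [MOD m] := by
        have e1 : (p - (b - a)) + (b - a) = p := by omega
        have e2 : a + (b - a) = b := by omega
        rw [e1, e2]; exact h2
      exact Nat.ModEq.add_right_cancel' _ h3
    · right; right
      exact ⟨h1, h2, by rw [swapF, if_neg h1, if_neg h2]⟩

lemma swapF_pos (ha : 1 ≤ a) (hab : a < b) (hbm : b ≤ m) (p : ℕ) (hp : 1 ≤ p) :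
    1 ≤ swapF m a b p := by
  rcases swapF_spec ha hab hbm p hp with ⟨_, h, _⟩ | ⟨_, h, hg, _⟩ | ⟨_, _, h⟩ <;> omega

lemma swapF_invol (ha : 1 ≤ a) (hab : a < b) (hbm : b ≤ m) (p : ℕ) (hp : 1 ≤ p) :
    swapF m a b (swapF m a b p) = p := by
  have hab' := hAB ha hab hbm
  rcases swapF_spec ha hab hbm p hp with ⟨h1, h2, h3⟩ | ⟨h1, h2, h3, h4⟩ | ⟨h1, h2, h3⟩
  · rcases swapF_spec ha hab hbm (swapF m a b p) (by omega) with
      ⟨g1, g2, g3⟩ | ⟨g1, g2, g3, g4⟩ | ⟨g1, g2, g3⟩ <;> omega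
  · rcases swapF_spec ha hab hbm (swapF m a b p) (by omega) with
      ⟨g1, g2, g3⟩ | ⟨g1, g2, g3, g4⟩ | ⟨g1, g2, g3⟩ <;> omega
  · rw [h3, h3]

lemma countRes_cons (c p : ℕ) (t : Multiset ℕ) :
    countRes m c (p ::ₘ t) = (if p % m = c % m then 1 else 0) + countRes m c t := by
  rw [countRes, Multiset.filter_cons]
  split <;> simp [countRes, add_comm]

lemma countRes_add (c : ℕ) (s t : Multiset ℕ) :
    countRes m c (s + t) = countRes m c s + countRes m c t := by
  simp [countRes, Multiset.filter_add]

lemma countRes_replicate (c k x : ℕ) :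
    countRes m c (Multiset.replicate k x) = if x % m = c % m then k else 0 := by
  by_cases h : x % m = c % m
  · rw [if_pos h, countRes, Multiset.filter_eq_self.mpr, Multiset.card_replicate]
    intro y hy; rw [Multiset.eq_of_mem_replicate hy]; exact h
  · rw [if_neg h, countRes, Multiset.filter_eq_nil.mpr, Multiset.card_zero]
    intro y hy hc; exact h (by rwa [Multiset.eq_of_mem_replicate hy] at hc)

lemma swap_facts (ha : 1 ≤ a) (hab : a < b) (hbm : b ≤ m) (s : Multiset ℕ)
    (hs : ∀ x ∈ s, 0 < x) :
    (s.map (swapF m a b)).sum + (b - a) * countRes m b s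
        = s.sum + (b - a) * countRes m a s ∧
    countRes m a (s.map (swapF m a b)) = countRes m b s ∧
    countRes m b (s.map (swapF m a b)) = countRes m a s := by
  have hab' := hAB ha hab hbm
  induction s using Multiset.induction with
  | empty => simp [countRes]
  | cons p s ih =>
    have hp : 0 < p := hs p (Multiset.mem_cons_self p s)
    have hs' : ∀ x ∈ s, 0 < x := fun x hx => hs x (Multiset.mem_cons_of_mem hx)
    obtain ⟨ih1, ih2, ih3⟩ := ih hs'
    rcases swapF_spec ha hab hbm p hp with ⟨h1, h2, h3⟩ | ⟨h1, h2, h3, h4⟩ | ⟨h1, h2, h3⟩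
    · have hn1 : p % m ≠ b % m := by omega
      have hn2 : (swapF m a b p) % m ≠ a % m := by omega
      simp only [Multiset.map_cons, Multiset.sum_cons, countRes_cons, h1, h3, hn1, hn2,
        eq_self_iff_true, if_true, if_false, if_neg (Ne.symm hab'), if_neg hab',
        if_pos rfl, Nat.mul_add, Nat.mul_one, Nat.mul_zero, Nat.add_zero, Nat.zero_add]
      refine ⟨by omega, by omega, by omega⟩
    · have hn1 : p % m ≠ a % m := by omega
      have hn2 : (swapF m a b p) % m ≠ b % m := by omega
      simp only [Multiset.map_cons, Multiset.sum_cons, countRes_cons, h1, h4, hn1, hn2,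
        eq_self_iff_true, if_true, if_false, if_neg (Ne.symm hab'), if_neg hab',
        if_pos rfl, Nat.mul_add, Nat.mul_one, Nat.mul_zero, Nat.add_zero, Nat.zero_add]
      refine ⟨by omega, by omega, by omega⟩
    · simp only [Multiset.map_cons, Multiset.sum_cons, countRes_cons, h3, if_neg h1,
        if_neg h2, Nat.mul_add, Nat.mul_one, Nat.mul_zero, Nat.add_zero, Nat.zero_add]
      refine ⟨by omega, by omega, by omega⟩

lemma swap_swap (ha : 1 ≤ a) (hab : a < b) (hbm : b ≤ m) (s : Multiset ℕ)
    (hs : ∀ x ∈ s, 0 < x) :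
    (s.map (swapF m a b)).map (swapF m a b) = s := by
  rw [Multiset.map_map]
  calc s.map (swapF m a b ∘ swapF m a b) = s.map id := by
        apply Multiset.map_congr rfl
        intro x hx
        exact swapF_invol ha hab hbm x (hs x hx)
    _ = s := Multiset.map_id s

lemma swap_pos (ha : 1 ≤ a) (hab : a < b) (hbm : b ≤ m) (s : Multiset ℕ)
    (hs : ∀ x ∈ s, 0 < x) :
    ∀ x ∈ s.map (swapF m a b), 0 < x := by
  intro x hx
  obtain ⟨p, hp, rfl⟩ := Multiset.mem_map.mp hx
  exact swapF_pos ha hab hbm p (hs p hp)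

lemma swap_nodup (ha : 1 ≤ a) (hab : a < b) (hbm : b ≤ m) (s : Multiset ℕ)
    (hs : ∀ x ∈ s, 0 < x) (h : s.Nodup) : (s.map (swapF m a b)).Nodup := by
  refine h.map_on ?_
  intro x hx y hy hxy
  have := congrArg (swapF m a b) hxy
  rwa [swapF_invol ha hab hbm x (hs x hx), swapF_invol ha hab hbm y (hs y hy)] at this

end

end OverBiasAux


namespace OverBiasAux

section
variable (m a b : ℕ)

/-- excess of b-parts over a-parts -/
def eps (x : Σ kl : ℕ × ℕ, kl.1.Partition × kl.2.Partition) : ℕ :=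
  (countRes m b x.2.1.parts + countRes m b x.2.2.parts)
    - (countRes m a x.2.1.parts + countRes m a x.2.2.parts)

def t1 (x : Σ kl : ℕ × ℕ, kl.1.Partition × kl.2.Partition) : Multiset ℕ :=
  x.2.1.parts.map (swapF m a b) + Multiset.replicate ((b - a) * eps m a b x) 1

def t2 (x : Σ kl : ℕ × ℕ, kl.1.Partition × kl.2.Partition) : Multiset ℕ :=
  x.2.2.parts.map (swapF m a b)

variable {m a b}

def Phi (ha : 1 ≤ a) (hab : a < b) (hbm : b ≤ m)
    (x : Σ kl : ℕ × ℕ, kl.1.Partition × kl.2.Partition) :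
    Σ kl : ℕ × ℕ, kl.1.Partition × kl.2.Partition :=
  ⟨((t1 m a b x).sum, (t2 m a b x).sum),
   ⟨⟨t1 m a b x, fun {y} hy => by
      rcases Multiset.mem_add.mp hy with h | h
      · exact swap_pos ha hab hbm _ (fun z hz => x.2.1.parts_pos hz) y h
      · rw [Multiset.eq_of_mem_replicate h]; exact Nat.one_pos, rfl⟩,
    ⟨t2 m a b x, fun {y} hy =>
      swap_pos ha hab hbm _ (fun z hz => x.2.2.parts_pos hz) y hy, rfl⟩⟩⟩

lemma Phi_parts1 (ha : 1 ≤ a) (hab : a < b) (hbm : b ≤ m) (x) :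
    (Phi ha hab hbm x).2.1.parts = t1 m a b x := rfl

lemma Phi_parts2 (ha : 1 ≤ a) (hab : a < b) (hbm : b ≤ m) (x) :
    (Phi ha hab hbm x).2.2.parts = t2 m a b x := rfl

end

end OverBiasAux

/-- For `1 ≤ a < b ≤ m` and all `n ≥ 0`, among overpartitions of `n`, those in
which parts `≡ a (mod m)` outnumber parts `≡ b (mod m)` are at least as
numerous as those in which parts `≡ b (mod m)` outnumber parts `≡ a (mod m)`. -/
theorem overpartition_residue_bias (a b m : ℕ) (ha : 1 ≤ a) (hab : a < b)
    (hbm : b ≤ m) (n : ℕ) :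
    overBias b a m n ≤ overBias a b m n := by
  classical
  open OverBiasAux in
  have hab' : a % m ≠ b % m := OverBiasAux.hAB ha hab hbm
  have h1b : 1 % m ≠ b % m := OverBiasAux.h1B ha hab hbm
  have repr : ∀ u v : ℕ, overBias u v m n =
      ((Finset.HasAntidiagonal.antidiagonal n).sigma (fun kl =>
        ((Finset.univ : Finset (kl.1.Partition × kl.2.Partition)).filter
          (fun p => p.2.parts.Nodup ∧
            countRes m v p.1.parts + countRes m v p.2.parts <
              countRes m u p.1.parts + countRes m u p.2.parts)))).card := by
    intro u v
    rw [overBias, Finset.card_sigma]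
  rw [repr b a, repr a b]
  apply Finset.card_le_card_of_injOn (OverBiasAux.Phi ha hab hbm)
  · -- maps into the target
    rintro ⟨⟨k, l⟩, lam, mu⟩ hx
    simp only [Finset.mem_coe, Finset.mem_sigma, Finset.mem_filter, Finset.mem_univ, true_and,
      Finset.HasAntidiagonal.mem_antidiagonal] at hx
    obtain ⟨hkl, hnd, hlt⟩ := hx
    have hlpos : ∀ z ∈ lam.parts, 0 < z := fun z hz => lam.parts_pos hz
    have hmpos : ∀ z ∈ mu.parts, 0 < z := fun z hz => mu.parts_pos hz
    obtain ⟨hsum1, hca1, hcb1⟩ := OverBiasAux.swap_facts ha hab hbm lam.parts hlpos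
    obtain ⟨hsum2, hca2, hcb2⟩ := OverBiasAux.swap_facts ha hab hbm mu.parts hmpos
    set x : Σ kl : ℕ × ℕ, kl.1.Partition × kl.2.Partition := ⟨(k, l), lam, mu⟩ with hxdef
    simp only [Finset.mem_coe, Finset.mem_sigma, Finset.mem_filter, Finset.mem_univ, true_and,
      Finset.mem_antidiagonal, OverBiasAux.Phi_parts1, OverBiasAux.Phi_parts2]
    have hx1 : x.2.1 = lam := rfl
    have hx2 : x.2.2 = mu := rfl
    have heps : (countRes m a lam.parts + countRes m a mu.parts)
        + OverBiasAux.eps m a b x = countRes m b lam.parts + countRes m b mu.parts := by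
      rw [OverBiasAux.eps, hx1, hx2]; omega
    refine ⟨?_, ?_, ?_⟩
    · -- sums to n
      refine Finset.HasAntidiagonal.mem_antidiagonal.mpr ?_
      show (OverBiasAux.t1 m a b x).sum + (OverBiasAux.t2 m a b x).sum = n
      rw [OverBiasAux.t1, OverBiasAux.t2, hx1, hx2, Multiset.sum_add,
        Multiset.sum_replicate, smul_eq_mul, mul_one]
      have hd : (b - a) * ((countRes m a lam.parts + countRes m a mu.parts)
          + OverBiasAux.eps m a b x)
          = (b - a) * (countRes m b lam.parts + countRes m b mu.parts) := by
        rw [heps]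
      have e1 : (b - a) * ((countRes m a lam.parts + countRes m a mu.parts)
          + OverBiasAux.eps m a b x)
          = (b - a) * countRes m a lam.parts + (b - a) * countRes m a mu.parts
            + (b - a) * OverBiasAux.eps m a b x := by ring
      have e2 : (b - a) * (countRes m b lam.parts + countRes m b mu.parts)
          = (b - a) * countRes m b lam.parts + (b - a) * countRes m b mu.parts := by ring
      have hk : lam.parts.sum = k := lam.parts_sum
      have hl : mu.parts.sum = l := mu.parts_sum
      omega
    · -- nodup
      show (OverBiasAux.t2 m a b x).Nodup
      rw [OverBiasAux.t2, hx2]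
      exact OverBiasAux.swap_nodup ha hab hbm mu.parts hmpos hnd
    · -- count inequality
      show countRes m b (OverBiasAux.t1 m a b x) + countRes m b (OverBiasAux.t2 m a b x)
          < countRes m a (OverBiasAux.t1 m a b x) + countRes m a (OverBiasAux.t2 m a b x)
      rw [OverBiasAux.t1, OverBiasAux.t2, hx1, hx2, OverBiasAux.countRes_add,
        OverBiasAux.countRes_add, OverBiasAux.countRes_replicate,
        OverBiasAux.countRes_replicate, if_neg h1b, hca1, hca2, hcb1, hcb2]
      by_cases h1a : 1 % m = a % m
      · rw [if_pos h1a]; omega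
      · rw [if_neg h1a]; omega
  · -- injectivity
    rintro ⟨⟨k1, l1⟩, lam1, mu1⟩ h1 ⟨⟨k2, l2⟩, lam2, mu2⟩ h2 heq
    simp only [Finset.coe_sigma, Set.mem_sigma_iff, Finset.mem_coe, Finset.mem_filter,
      Finset.mem_univ, true_and, Finset.mem_antidiagonal] at h1 h2
    obtain ⟨hkl1, hnd1, hlt1⟩ := h1
    obtain ⟨hkl2, hnd2, hlt2⟩ := h2
    set x : Σ kl : ℕ × ℕ, kl.1.Partition × kl.2.Partition := ⟨(k1, l1), lam1, mu1⟩ with hx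
    set y : Σ kl : ℕ × ℕ, kl.1.Partition × kl.2.Partition := ⟨(k2, l2), lam2, mu2⟩ with hy
    have hlpos1 : ∀ z ∈ lam1.parts, 0 < z := fun z hz => lam1.parts_pos hz
    have hmpos1 : ∀ z ∈ mu1.parts, 0 < z := fun z hz => mu1.parts_pos hz
    have hlpos2 : ∀ z ∈ lam2.parts, 0 < z := fun z hz => lam2.parts_pos hz
    have hmpos2 : ∀ z ∈ mu2.parts, 0 < z := fun z hz => mu2.parts_pos hz
    obtain ⟨_, hca1, hcb1⟩ := OverBiasAux.swap_facts ha hab hbm lam1.parts hlpos1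
    obtain ⟨_, hca2, hcb2⟩ := OverBiasAux.swap_facts ha hab hbm lam2.parts hlpos2
    have hT1 : OverBiasAux.t1 m a b x = OverBiasAux.t1 m a b y :=
      congrArg (fun z => z.2.1.parts) heq
    have hT2 : OverBiasAux.t2 m a b x = OverBiasAux.t2 m a b y :=
      congrArg (fun z => z.2.2.parts) heq
    have hmu : mu1.parts = mu2.parts := by
      have h := congrArg (Multiset.map (OverBiasAux.swapF m a b)) hT2
      rw [OverBiasAux.t2, OverBiasAux.t2] at h
      have e1 : x.2.2 = mu1 := rfl
      have e2 : y.2.2 = mu2 := rfl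
      rw [e1, e2, OverBiasAux.swap_swap ha hab hbm mu1.parts hmpos1,
        OverBiasAux.swap_swap ha hab hbm mu2.parts hmpos2] at h
      exact h
    -- derive e x = e y
    have hx1 : x.2.1 = lam1 := rfl
    have hy1 : y.2.1 = lam2 := rfl
    have hx2 : x.2.2 = mu1 := rfl
    have hy2 : y.2.2 = mu2 := rfl
    have hBcount := congrArg (countRes m b) hT1
    rw [OverBiasAux.t1, OverBiasAux.t1, hx1, hy1, OverBiasAux.countRes_add,
      OverBiasAux.countRes_add, OverBiasAux.countRes_replicate,
      OverBiasAux.countRes_replicate, if_neg h1b, if_neg h1b, hcb1, hcb2] at hBcount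
    -- hBcount : countRes m a lam1.parts + 0 = countRes m a lam2.parts + 0
    have hAcount := congrArg (countRes m a) hT1
    rw [OverBiasAux.t1, OverBiasAux.t1, hx1, hy1, OverBiasAux.countRes_add,
      OverBiasAux.countRes_add, OverBiasAux.countRes_replicate,
      OverBiasAux.countRes_replicate, hca1, hca2] at hAcount
    have hepsx : (countRes m a lam1.parts + countRes m a mu1.parts)
        + OverBiasAux.eps m a b x = countRes m b lam1.parts + countRes m b mu1.parts := by
      rw [OverBiasAux.eps, hx1, hx2]; omega
    have hepsy : (countRes m a lam2.parts + countRes m a mu2.parts)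
        + OverBiasAux.eps m a b y = countRes m b lam2.parts + countRes m b mu2.parts := by
      rw [OverBiasAux.eps, hy1, hy2]; omega
    have hee : OverBiasAux.eps m a b x = OverBiasAux.eps m a b y := by
      by_cases h1a : 1 % m = a % m
      · rw [if_pos h1a, if_pos h1a] at hAcount
        -- hAcount : cb lam1 + (b-a)*eps x = cb lam2 + (b-a)*eps y
        rcases lt_trichotomy (OverBiasAux.eps m a b x) (OverBiasAux.eps m a b y) with h | h | h
        · exfalso
          have hmul : (b - a) * (OverBiasAux.eps m a b x + 1)
              ≤ (b - a) * OverBiasAux.eps m a b y :=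
            Nat.mul_le_mul_left _ (by omega)
          have hs : (b - a) * (OverBiasAux.eps m a b x + 1)
              = (b - a) * OverBiasAux.eps m a b x + (b - a) := by ring
          rw [hmu] at hepsx
          omega
        · exact h
        · exfalso
          have hmul : (b - a) * (OverBiasAux.eps m a b y + 1)
              ≤ (b - a) * OverBiasAux.eps m a b x :=
            Nat.mul_le_mul_left _ (by omega)
          have hs : (b - a) * (OverBiasAux.eps m a b y + 1)
              = (b - a) * OverBiasAux.eps m a b y + (b - a) := by ring
          rw [hmu] at hepsx
          omega
      · rw [if_neg h1a, if_neg h1a] at hAcount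
        rw [hmu] at hepsx
        omega
    have hlam : lam1.parts = lam2.parts := by
      have h := hT1
      rw [OverBiasAux.t1, OverBiasAux.t1, hx1, hy1, hee] at h
      have h' : lam1.parts.map (OverBiasAux.swapF m a b)
          = lam2.parts.map (OverBiasAux.swapF m a b) := add_right_cancel h
      have h'' := congrArg (Multiset.map (OverBiasAux.swapF m a b)) h'
      rwa [OverBiasAux.swap_swap ha hab hbm lam1.parts hlpos1,
        OverBiasAux.swap_swap ha hab hbm lam2.parts hlpos2] at h''
    have hk : k1 = k2 := by
      have e1 := lam1.parts_sum
      have e2 := lam2.parts_sum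
      rw [hlam] at e1
      exact e1.symm.trans e2
    have hl : l1 = l2 := by
      have e1 := mu1.parts_sum
      have e2 := mu2.parts_sum
      rw [hmu] at e1
      exact e1.symm.trans e2
    subst hk
    subst hl
    have hlam' : lam1 = lam2 := Nat.Partition.ext hlam
    have hmu' : mu1 = mu2 := Nat.Partition.ext hmu
    subst hlam'
    subst hmu'
    rfl
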